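/- Let p ≡ 3 (mod 4) and q ≡ 3 (mod 4) be distinct primes and n = p·q. If y is a unit modulo n which is a square modulo n, then exactly one of the four square roots of y modulo n is itself a quadratic residue modulo n (i.e., a square in (ℤ/nℤ)^×). -/
import Mathlib

lemma aux_prime (p : ℕ) (hp : p.Prime) (hp4 : p % 4 = 3) (a : ZMod p) (ha : a ≠ 0)
    (hsa : IsSquare a) : ∃! x : ZMod p, x ^ 2 = a ∧ IsSquare x := by
  classical
  haveI := Fact.mk hp
  have hn1 : ¬ IsSquare (-1 : ZMod p) := by
    rw [ZMod.exists_sq_eq_neg_one_iff]; simp [hp4]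
  have hkey : ∀ x : ZMod p, x ≠ 0 → (IsSquare x ↔ ¬ IsSquare (-x)) := by
    intro x hx
    have hc : quadraticChar (ZMod p) (-x) = - quadraticChar (ZMod p) x := by
      rw [show (-x : ZMod p) = -1 * x by ring, map_mul,
        (quadraticChar_neg_one_iff_not_isSquare).mpr hn1]; ring
    rw [← quadraticChar_one_iff_isSquare hx, ← quadraticChar_neg_one_iff_not_isSquare, hc]
    omega
  obtain ⟨r, hr⟩ := hsa
  have hr0 : r ≠ 0 := by rintro rfl; simp at hr; exact ha hr
  have hroots : ∀ z : ZMod p, z ^ 2 = a → z = r ∨ z = -r := by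
    intro z hz
    have : z * z = r * r := by rw [← hr]; rw [sq] at hz; exact hz
    exact mul_self_eq_mul_self_iff.mp this
  by_cases hsr : IsSquare r
  · refine ⟨r, ⟨by rw [sq, ← hr], hsr⟩, ?_⟩
    rintro z ⟨hz, hzs⟩
    rcases hroots z hz with h | h
    · exact h
    · exfalso; exact ((hkey r hr0).mp hsr) (h ▸ hzs)
  · have hsnr : IsSquare (-r) := by
      by_contra h
      exact hsr ((hkey r hr0).mpr h)
    refine ⟨-r, ⟨by rw [show ((-r)^2 : ZMod p) = r * r by ring, ← hr], hsnr⟩, ?_⟩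
    rintro z ⟨hz, hzs⟩
    rcases hroots z hz with h | h
    · exact absurd (h ▸ hzs) hsr
    · exact h

theorem stmt_12 (p q : ℕ) (hp : p.Prime) (hq : q.Prime) (hp4 : p % 4 = 3)
    (hq4 : q % 4 = 3) (hpq : p ≠ q) (n : ℕ) (hn : n = p * q)
    (y : ZMod n) (hy : IsUnit y) (hsq : IsSquare y) :
    ∃! x : ZMod n, x ^ 2 = y ∧ IsSquare x := by
  subst hn
  haveI := Fact.mk hp
  haveI := Fact.mk hq
  have hco : Nat.Coprime p q := (Nat.coprime_primes hp hq).mpr hpq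
  let e : ZMod (p * q) ≃+* ZMod p × ZMod q := ZMod.chineseRemainder hco
  have hyp : (e y).1 ≠ 0 := by
    have : IsUnit (e y) := hy.map e
    have := this.map (RingHom.fst (ZMod p) (ZMod q))
    exact this.ne_zero
  have hyq : (e y).2 ≠ 0 := by
    have : IsUnit (e y) := hy.map e
    have := this.map (RingHom.snd (ZMod p) (ZMod q))
    exact this.ne_zero
  have hsqp : IsSquare (e y).1 := ((hsq.map e.toRingHom).map (RingHom.fst (ZMod p) (ZMod q)))
  have hsqq : IsSquare (e y).2 := ((hsq.map e.toRingHom).map (RingHom.snd (ZMod p) (ZMod q)))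
  obtain ⟨xp, ⟨hxp2, hxps⟩, hxpu⟩ := aux_prime p hp hp4 _ hyp hsqp
  obtain ⟨xq, ⟨hxq2, hxqs⟩, hxqu⟩ := aux_prime q hq hq4 _ hyq hsqq
  have hprodsq : ∀ z : ZMod p × ZMod q, IsSquare z ↔ IsSquare z.1 ∧ IsSquare z.2 := by
    intro z
    constructor
    · intro h
      exact ⟨h.map (RingHom.fst (ZMod p) (ZMod q)), h.map (RingHom.snd (ZMod p) (ZMod q))⟩
    · rintro ⟨⟨a, ha⟩, ⟨b, hb⟩⟩
      exact ⟨(a, b), Prod.ext ha hb⟩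
  have hesq : ∀ x : ZMod (p * q), IsSquare x ↔ IsSquare (e x) := by
    intro x
    constructor
    · intro h; exact h.map e.toRingHom
    · intro h
      have := h.map e.symm.toRingHom
      simpa using this
  refine ⟨e.symm (xp, xq), ⟨?_, ?_⟩, ?_⟩
  · apply e.injective
    rw [map_pow]
    simp only [RingEquiv.apply_symm_apply]
    exact Prod.ext hxp2 hxq2
  · rw [hesq]
    simp only [RingEquiv.apply_symm_apply]
    exact (hprodsq _).mpr ⟨hxps, hxqs⟩
  · rintro z ⟨hz2, hzs⟩
    have h1 : (e z).1 ^ 2 = (e y).1 := by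
      have : e (z ^ 2) = e y := congrArg e hz2
      rw [map_pow] at this
      exact congrArg Prod.fst this
    have h2 : (e z).2 ^ 2 = (e y).2 := by
      have : e (z ^ 2) = e y := congrArg e hz2
      rw [map_pow] at this
      exact congrArg Prod.snd this
    have hezs := (hprodsq _).mp ((hesq z).mp hzs)
    have e1 : (e z).1 = xp := hxpu _ ⟨h1, hezs.1⟩
    have e2 : (e z).2 = xq := hxqu _ ⟨h2, hezs.2⟩
    apply e.injective
    simp only [RingEquiv.apply_symm_apply]
    exact Prod.ext e1 e2
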